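/- For all real numbers b > c > -1, it holds that ((c+1)/(b+1))² < f(b,c) < 1. -/

import Mathlib

open Filter Finset Topology

/-- The Thue–Morse sequence with values `±1`: `u n = (-1)^(s₂ n)` where `s₂ n`
is the sum of the binary digits of `n`. -/
def u (n : ℕ) : ℤ := (-1) ^ (Nat.digits 2 n).sum

lemma u_cases (n : ℕ) : u n = 1 ∨ u n = -1 := by
  rcases Nat.even_or_odd ((Nat.digits 2 n).sum) with h | h
  · left; exact h.neg_one_pow
  · right; exact h.neg_one_pow

lemma u_two_mul (n : ℕ) : u (2 * n) = u n := by
  rcases n with _ | n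
  · rfl
  · unfold u
    rw [Nat.digits_def' (b := 2) (by norm_num) (by positivity)]
    simp [Nat.mul_div_cancel_left, Nat.mul_mod_right]

lemma u_two_mul_add_one (n : ℕ) : u (2 * n + 1) = -u n := by
  unfold u
  rw [Nat.digits_def' (b := 2) (by norm_num) (by positivity)]
  have h1 : (2 * n + 1) % 2 = 1 := by omega
  have h2 : (2 * n + 1) / 2 = n := by omega
  rw [h1, h2]
  simp [pow_succ, pow_add, mul_comm]

lemma sum_u_even (N : ℕ) : ∑ n ∈ range (2 * N), u n = 0 := by
  induction N with
  | zero => simp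
  | succ N ih =>
    have h : 2 * (N + 1) = 2 * N + 1 + 1 := by ring
    rw [h, Finset.sum_range_succ, Finset.sum_range_succ, ih,
      u_two_mul_add_one, u_two_mul]
    ring

lemma sum_u_range_bound (N : ℕ) :
    -1 ≤ ∑ n ∈ range N, u n ∧ ∑ n ∈ range N, u n ≤ 1 := by
  rcases Nat.even_or_odd N with ⟨M, hM⟩ | ⟨M, hM⟩
  · have : N = 2 * M := by omega
    rw [this, sum_u_even]; exact ⟨by norm_num, by norm_num⟩
  · rw [hM, Finset.sum_range_succ, sum_u_even, u_two_mul, zero_add]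
    rcases u_cases M with h | h <;> rw [h] <;> exact ⟨by norm_num, by norm_num⟩

lemma sum_u_Icc_eq (N : ℕ) :
    ∑ n ∈ Icc 1 N, u n = (∑ n ∈ range (N + 1), u n) - 1 := by
  have h : ∑ n ∈ range (N + 1), u n
      = ∑ n ∈ range N, u (n + 1) + u 0 := Finset.sum_range_succ' u N
  have h2 : ∑ n ∈ Icc 1 N, u n = ∑ n ∈ range N, u (n + 1) := by
    rw [show Icc 1 N = Ico 1 (N + 1) by rfl, Finset.sum_Ico_eq_sum_range]
    simp [add_comm]
  have hu0 : u 0 = 1 := by simp [u]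
  omega

lemma sum_u_Icc_bound (N : ℕ) :
    -2 ≤ ∑ n ∈ Icc 1 N, u n ∧ ∑ n ∈ Icc 1 N, u n ≤ 0 := by
  have := sum_u_range_bound (N + 1)
  rw [sum_u_Icc_eq]
  omega

/-- Abel-summation invariant for the weighted Thue–Morse sums. -/
lemma abel_key (A : ℕ → ℝ) (hA : ∀ n, 1 ≤ n → A (n + 1) ≤ A n)
    (N : ℕ) (hN : 1 ≤ N) :
    (∑ n ∈ Icc 1 N, (u n : ℝ) * A n) - (∑ n ∈ Icc 1 N, (u n : ℝ)) * A (N + 1)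
      ≤ A 2 - A 1 ∧
    -(A 1) - A 2 + 2 * A (N + 1)
      ≤ (∑ n ∈ Icc 1 N, (u n : ℝ) * A n)
        - (∑ n ∈ Icc 1 N, (u n : ℝ)) * A (N + 1) := by
  induction N, hN using Nat.le_induction with
  | base =>
    have hu1 : u 1 = -1 := by
      rw [show (1:ℕ) = 2*0+1 from rfl, u_two_mul_add_one]; simp [u]
    simp only [Finset.Icc_self, Finset.sum_singleton, hu1]
    refine ⟨?_, ?_⟩ <;> (push_cast; norm_num) <;> linarith
  | succ N hN ih =>
    have hT := sum_u_Icc_bound (N + 1)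
    have hTR : (-2 : ℝ) ≤ ∑ n ∈ Icc 1 (N + 1), (u n : ℝ) ∧
        (∑ n ∈ Icc 1 (N + 1), (u n : ℝ)) ≤ 0 := by
      constructor
      · rw [← Int.cast_sum]; exact_mod_cast hT.1
      · rw [← Int.cast_sum]; exact_mod_cast hT.2
    have hstep1 : ∑ n ∈ Icc 1 (N + 1), (u n : ℝ) * A n
        = (∑ n ∈ Icc 1 N, (u n : ℝ) * A n) + (u (N + 1) : ℝ) * A (N + 1) :=
      Finset.sum_Icc_succ_top (by omega) _
    have hstep2 : ∑ n ∈ Icc 1 (N + 1), (u n : ℝ)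
        = (∑ n ∈ Icc 1 N, (u n : ℝ)) + (u (N + 1) : ℝ) :=
      Finset.sum_Icc_succ_top (by omega) _
    have hAd : A (N + 1 + 1) ≤ A (N + 1) := hA (N + 1) (by omega)
    have hR : (∑ n ∈ Icc 1 (N + 1), (u n : ℝ) * A n)
        - (∑ n ∈ Icc 1 (N + 1), (u n : ℝ)) * A (N + 1 + 1)
        = ((∑ n ∈ Icc 1 N, (u n : ℝ) * A n)
            - (∑ n ∈ Icc 1 N, (u n : ℝ)) * A (N + 1))
          + (∑ n ∈ Icc 1 (N + 1), (u n : ℝ)) * (A (N + 1) - A (N + 1 + 1)) := by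
      rw [hstep1, hstep2]; ring
    constructor
    · rw [hR]
      nlinarith [ih.1, mul_nonpos_of_nonpos_of_nonneg hTR.2 (by linarith : (0:ℝ) ≤ A (N+1) - A (N+1+1))]
    · rw [hR]
      nlinarith [ih.2, mul_le_mul_of_nonneg_right hTR.1 (by linarith : (0:ℝ) ≤ A (N+1) - A (N+1+1))]

lemma sum_bounds (A : ℕ → ℝ) (hA : ∀ n, 1 ≤ n → A (n + 1) ≤ A n)
    (hApos : ∀ n, 1 ≤ n → 0 < A n) (N : ℕ) (hN : 1 ≤ N) :
    -(A 1) - A 2 ≤ ∑ n ∈ Icc 1 N, (u n : ℝ) * A n ∧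
    ∑ n ∈ Icc 1 N, (u n : ℝ) * A n ≤ A 2 - A 1 := by
  obtain ⟨h1, h2⟩ := abel_key A hA N hN
  have hT := sum_u_Icc_bound N
  have hTR1 : (-2 : ℝ) ≤ ∑ n ∈ Icc 1 N, (u n : ℝ) := by
    rw [← Int.cast_sum]; exact_mod_cast hT.1
  have hTR2 : (∑ n ∈ Icc 1 N, (u n : ℝ)) ≤ 0 := by
    rw [← Int.cast_sum]; exact_mod_cast hT.2
  have hAp : 0 < A (N + 1) := hApos (N + 1) (by omega)
  constructor
  · nlinarith
  · nlinarith

/-- If `f b c` is, for `b, c > -1`, the (positive) limit of the partial products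
`∏_{n=1}^{N} ((n+b)/(n+c))^{u_n}`, then for `b > c > -1` one has
`((c+1)/(b+1))² < f(b,c) < 1`. -/
theorem stmt_7 (f : ℝ → ℝ → ℝ)
    (hf : ∀ b c : ℝ, -1 < b → -1 < c →
      Tendsto (fun N : ℕ => ∏ n ∈ Finset.Icc 1 N,
        (((n : ℝ) + b) / ((n : ℝ) + c)) ^ (u n)) atTop (𝓝 (f b c)))
    (hfpos : ∀ b c : ℝ, -1 < b → -1 < c → 0 < f b c) :
    ∀ b c : ℝ, -1 < c → c < b →
      ((c + 1) / (b + 1)) ^ 2 < f b c ∧ f b c < 1 := by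
  intro b c hc hcb
  have hb : -1 < b := hc.trans hcb
  set A : ℕ → ℝ := fun n => Real.log (((n : ℝ) + b) / ((n : ℝ) + c)) with hAdef
  have hden : ∀ n : ℕ, 1 ≤ n → (0 : ℝ) < (n : ℝ) + c := by
    intro n hn
    have : (1 : ℝ) ≤ (n : ℝ) := by exact_mod_cast hn
    linarith
  have hfrac : ∀ n : ℕ, 1 ≤ n → 1 < ((n : ℝ) + b) / ((n : ℝ) + c) := by
    intro n hn
    rw [one_lt_div (hden n hn)]
    linarith
  have hApos : ∀ n : ℕ, 1 ≤ n → 0 < A n := fun n hn => Real.log_pos (hfrac n hn)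
  have hA : ∀ n : ℕ, 1 ≤ n → A (n + 1) ≤ A n := by
    intro n hn
    have hn' : (1 : ℝ) ≤ (n : ℝ) := by exact_mod_cast hn
    have h1 : (0 : ℝ) < (n : ℝ) + c := hden n hn
    have h2 : (0 : ℝ) < (n : ℝ) + 1 + c := by linarith
    apply Real.log_le_log (by push_cast; exact div_pos (by linarith) h2)
    push_cast
    rw [div_le_div_iff₀ h2 h1]
    nlinarith
  have hA1 : A 1 = Real.log ((1 + b) / (1 + c)) := by norm_num [hAdef]
  have hA2 : A 2 = Real.log ((2 + b) / (2 + c)) := by norm_num [hAdef]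
  have hA12 : A 2 < A 1 := by
    rw [hA1, hA2]
    apply Real.log_lt_log (div_pos (by linarith) (by linarith))
    rw [div_lt_div_iff₀ (by linarith) (by linarith)]
    nlinarith
  have hprod : ∀ N : ℕ, ∏ n ∈ Finset.Icc 1 N,
      (((n : ℝ) + b) / ((n : ℝ) + c)) ^ (u n)
      = Real.exp (∑ n ∈ Icc 1 N, (u n : ℝ) * A n) := by
    intro N
    rw [Real.exp_sum]
    apply Finset.prod_congr rfl
    intro n hn
    have hn1 : 1 ≤ n := (Finset.mem_Icc.mp hn).1
    have hx : (0 : ℝ) < ((n : ℝ) + b) / ((n : ℝ) + c) :=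
      lt_trans one_pos (hfrac n hn1)
    rcases u_cases n with h | h <;> rw [h]
    · push_cast
      rw [one_mul, Real.exp_log hx, zpow_one]
    · push_cast
      rw [neg_one_mul, Real.exp_neg, Real.exp_log hx, zpow_neg, zpow_one]
  have hfp := hfpos b c hb hc
  have htend : Tendsto (fun N : ℕ => ∑ n ∈ Icc 1 N, (u n : ℝ) * A n) atTop
      (𝓝 (Real.log (f b c))) := by
    have h1 := hf b c hb hc
    have h2 : Tendsto (fun N : ℕ => Real.exp (∑ n ∈ Icc 1 N, (u n : ℝ) * A n))
        atTop (𝓝 (f b c)) := by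
      refine h1.congr fun N => hprod N
    have h3 := ((Real.continuousAt_log hfp.ne').tendsto).comp h2
    simpa only [Function.comp_def, Real.log_exp] using h3
  have hub : Real.log (f b c) ≤ A 2 - A 1 :=
    le_of_tendsto htend (eventually_atTop.2 ⟨1, fun N hN => (sum_bounds A hA hApos N hN).2⟩)
  have hlb : -(A 1) - A 2 ≤ Real.log (f b c) :=
    ge_of_tendsto htend (eventually_atTop.2 ⟨1, fun N hN => (sum_bounds A hA hApos N hN).1⟩)
  constructor
  · have hcb1 : (0 : ℝ) < (c + 1) / (b + 1) := by
      apply div_pos <;> linarith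
    rw [← Real.log_lt_log_iff (by positivity) hfp]
    have hinv : (c + 1) / (b + 1) = ((1 + b) / (1 + c))⁻¹ := by
      rw [inv_div]; ring_nf
    have hlog : Real.log (((c + 1) / (b + 1)) ^ 2) = -(2 * A 1) := by
      rw [Real.log_pow, hinv, Real.log_inv, hA1]
      push_cast; ring
    rw [hlog]
    linarith
  · rw [← Real.exp_log hfp]
    rw [Real.exp_lt_one_iff]
    linarith
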